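/- Let w, w* ∈ ℝ^n be given by w = ReLU(αy + βz·1) and w* = h_b(αy + βz*·1) componentwise, where h_b(x) = (sqrt(x²+b)+x)/2, b > 0, β ≠ 0, and z, z* ∈ ℝ satisfy 1ᵀw = 1ᵀw* = m. Suppose h_b'(αy_i + βξ) ≥ C > 0 for all i and all ξ in the interval between z and z*. Then ‖w - w*‖₂ ≤ (√n·√b/2)·√(1 + 1/C²). -/

import Mathlib

private lemma deriv_aux (b : ℝ) (hb : 0 < b) (a β : ℝ) (ξ : ℝ) :
    HasDerivAt (fun ξ : ℝ => (Real.sqrt ((a + β * ξ) ^ 2 + b) + (a + β * ξ)) / 2)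
      ((((a + β * ξ) / Real.sqrt ((a + β * ξ) ^ 2 + b) + 1) / 2) * β) ξ := by
  have hc : HasDerivAt (fun ξ : ℝ => a + β * ξ) β ξ := by
    simpa using ((hasDerivAt_id ξ).const_mul β).const_add a
  set c := a + β * ξ with hcdef
  have hq : (0:ℝ) < c ^ 2 + b := by positivity
  have hsq : 0 < Real.sqrt (c ^ 2 + b) := Real.sqrt_pos.mpr hq
  have h2 : HasDerivAt (fun x : ℝ => x ^ 2 + b) (2 * c) c := by
    simpa using ((hasDerivAt_pow 2 c).add_const b)
  have h3 : HasDerivAt Real.sqrt (1 / (2 * Real.sqrt (c ^ 2 + b))) (c ^ 2 + b) :=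
    Real.hasDerivAt_sqrt hq.ne'
  have h4 : HasDerivAt (fun ξ : ℝ => Real.sqrt ((a + β * ξ) ^ 2 + b))
      (1 / (2 * Real.sqrt (c ^ 2 + b)) * (2 * c) * β) ξ := by
    have := (h3.comp c h2).comp ξ hc
    simpa [Function.comp_def] using this
  have h5 : HasDerivAt (fun ξ : ℝ => (Real.sqrt ((a + β * ξ) ^ 2 + b) + (a + β * ξ)) / 2)
      ((1 / (2 * Real.sqrt (c ^ 2 + b)) * (2 * c) * β + β) / 2) ξ := (h4.add hc).div_const 2
  convert h5 using 1
  field_simp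

private lemma sq_bound (b C s t δ sb : ℝ) (hC : 0 < C) (hsb : sb ^ 2 = b)
    (hsbnn : 0 ≤ sb) (hs0 : 0 ≤ s) (hsle : s ≤ sb / 2) (ht0 : 0 ≤ t) (htδ : t ≤ δ)
    (hδle : C * δ ≤ sb / 2) : (t - s) ^ 2 ≤ b / 4 + b / (4 * C ^ 2) := by
  have hCt : C * t ≤ sb / 2 := by nlinarith
  have ht2 : t ^ 2 ≤ b / (4 * C ^ 2) := by
    have h4 : (C * t) * (C * t) ≤ (sb / 2) * (sb / 2) :=
      mul_le_mul hCt hCt (mul_nonneg hC.le ht0) (by positivity)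
    rw [le_div_iff₀ (by positivity)]
    nlinarith [h4]
  have hs2 : s ^ 2 ≤ b / 4 := by nlinarith
  nlinarith [ht2, hs2, mul_nonneg ht0 hs0]

set_option maxHeartbeats 1000000 in
theorem stmt_10 (n : ℕ) (hn : 0 < n) (y : Fin n → ℝ) (α β b m : ℝ)
    (hβ : β ≠ 0) (hb : 0 < b) (z zstar : ℝ) (C : ℝ) (hC : 0 < C) (hC1 : C ≤ 1)
    (w wstar : Fin n → ℝ)
    (hw : ∀ i, w i = max (α * y i + β * z) 0)
    (hwstar : ∀ i, wstar i =
      (Real.sqrt ((α * y i + β * zstar) ^ 2 + b) + (α * y i + β * zstar)) / 2)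
    (hsum : ∑ i, w i = m) (hsumstar : ∑ i, wstar i = m)
    (hderiv : ∀ i, ∀ ξ ∈ Set.uIcc z zstar,
      C ≤ ((α * y i + β * ξ) / Real.sqrt ((α * y i + β * ξ) ^ 2 + b) + 1) / 2) :
    Real.sqrt (∑ i, (w i - wstar i) ^ 2) ≤
      Real.sqrt n * Real.sqrt b / 2 * Real.sqrt (1 + 1 / C ^ 2) := by
  set g : ℝ → ℝ := fun x => (Real.sqrt (x ^ 2 + b) + x) / 2 with hgdef
  set u : Fin n → ℝ := fun i => α * y i + β * z with hudef
  set v : Fin n → ℝ := fun i => α * y i + β * zstar with hvdef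
  set δ : ℝ := β * (z - zstar) with hδdef
  have hsqb : Real.sqrt b ^ 2 = b := Real.sq_sqrt hb.le
  have hsqbnn : 0 ≤ Real.sqrt b := Real.sqrt_nonneg b
  -- F1 : 0 ≤ g x - max x 0 ≤ √b / 2
  have hF1 : ∀ x : ℝ, 0 ≤ g x - max x 0 ∧ g x - max x 0 ≤ Real.sqrt b / 2 := by
    intro x
    have hmax : max x 0 = (x + |x|) / 2 := by
      rcases le_total x 0 with h | h
      · rw [max_eq_right h, abs_of_nonpos h]; ring
      · rw [max_eq_left h, abs_of_nonneg h]; ring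
    have h1 : |x| ≤ Real.sqrt (x ^ 2 + b) := by
      rw [← Real.sqrt_sq_eq_abs]
      exact Real.sqrt_le_sqrt (by linarith)
    have h2 : Real.sqrt (x ^ 2 + b) ≤ |x| + Real.sqrt b := by
      have hle : x ^ 2 + b ≤ (|x| + Real.sqrt b) ^ 2 := by
        nlinarith [abs_nonneg x, sq_abs x, mul_nonneg (abs_nonneg x) hsqbnn]
      calc Real.sqrt (x ^ 2 + b) ≤ Real.sqrt ((|x| + Real.sqrt b) ^ 2) :=
            Real.sqrt_le_sqrt hle
        _ = |x| + Real.sqrt b := Real.sqrt_sq (by positivity)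
    constructor
    · rw [hmax]; simp only [hgdef]; linarith
    · rw [hmax]; simp only [hgdef]; linarith
  -- key MVT estimate
  have key : ∀ i, |g (u i) - g (v i) - (1 + C) / 2 * δ| ≤ (1 - C) / 2 * |δ| := by
    intro i
    set f : ℝ → ℝ := fun ξ =>
      (Real.sqrt ((α * y i + β * ξ) ^ 2 + b) + (α * y i + β * ξ)) / 2
        - (1 + C) / 2 * (β * ξ) with hfdef
    set f' : ℝ → ℝ := fun ξ =>
      (((α * y i + β * ξ) / Real.sqrt ((α * y i + β * ξ) ^ 2 + b) + 1) / 2) * β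
        - (1 + C) / 2 * β with hf'def
    have hderivf : ∀ ξ ∈ Set.uIcc z zstar, HasDerivWithinAt f (f' ξ) (Set.uIcc z zstar) ξ := by
      intro ξ _
      have hlin : HasDerivAt (fun ξ : ℝ => (1 + C) / 2 * (β * ξ)) ((1 + C) / 2 * β) ξ := by
        simpa [mul_assoc] using (((hasDerivAt_id ξ).const_mul β).const_mul ((1 + C) / 2))
      exact ((deriv_aux b hb (α * y i) β ξ).sub hlin).hasDerivWithinAt
    have hbound : ∀ ξ ∈ Set.uIcc z zstar, ‖f' ξ‖ ≤ |β| * ((1 - C) / 2) := by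
      intro ξ hξ
      set c := α * y i + β * ξ with hcdef
      have hq : (0:ℝ) < c ^ 2 + b := by positivity
      have hsq : 0 < Real.sqrt (c ^ 2 + b) := Real.sqrt_pos.mpr hq
      have hD1 : C ≤ (c / Real.sqrt (c ^ 2 + b) + 1) / 2 := hderiv i ξ hξ
      have hD2 : (c / Real.sqrt (c ^ 2 + b) + 1) / 2 ≤ 1 := by
        have hcle : c ≤ Real.sqrt (c ^ 2 + b) := by
          calc c ≤ |c| := le_abs_self c
            _ ≤ Real.sqrt (c ^ 2 + b) := by
                rw [← Real.sqrt_sq_eq_abs]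
                exact Real.sqrt_le_sqrt (by linarith)
        have := (div_le_one hsq).mpr hcle
        linarith
      have heq : f' ξ = β * ((c / Real.sqrt (c ^ 2 + b) + 1) / 2 - (1 + C) / 2) := by
        simp only [hf'def]; ring
      rw [Real.norm_eq_abs, heq, abs_mul]
      apply mul_le_mul_of_nonneg_left _ (abs_nonneg β)
      rw [abs_le]
      constructor <;> linarith
    have h := (convex_uIcc z zstar).norm_image_sub_le_of_norm_hasDerivWithin_le
      hderivf hbound Set.right_mem_uIcc Set.left_mem_uIcc
    calc |g (u i) - g (v i) - (1 + C) / 2 * δ| = ‖f z - f zstar‖ := by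
          rw [Real.norm_eq_abs]
          congr 1
          simp only [hfdef, hgdef, hudef, hvdef, hδdef]
          ring
      _ ≤ |β| * ((1 - C) / 2) * ‖z - zstar‖ := h
      _ = (1 - C) / 2 * |δ| := by
          rw [Real.norm_eq_abs, hδdef, abs_mul]; ring
  -- sums
  have hgu : ∀ i, w i = max (u i) 0 := by intro i; rw [hw i]
  have hgv : ∀ i, wstar i = g (v i) := by intro i; rw [hwstar i]
  have hsumt : ∑ i, (g (u i) - g (v i)) = ∑ i, (g (u i) - max (u i) 0) := by
    have e1 : ∑ i, g (v i) = m := by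
      rw [← hsumstar]; exact Finset.sum_congr rfl fun i _ => (hgv i).symm
    have e2 : ∑ i, max (u i) 0 = m := by
      rw [← hsum]; exact Finset.sum_congr rfl fun i _ => (hgu i).symm
    rw [Finset.sum_sub_distrib, Finset.sum_sub_distrib, e1, e2]
  have hts_nonneg : 0 ≤ ∑ i, (g (u i) - g (v i)) := by
    rw [hsumt]
    exact Finset.sum_nonneg fun i _ => (hF1 (u i)).1
  have hts_le : ∑ i, (g (u i) - g (v i)) ≤ (n : ℝ) * (Real.sqrt b / 2) := by
    rw [hsumt]
    calc ∑ i, (g (u i) - max (u i) 0) ≤ ∑ _i : Fin n, (Real.sqrt b / 2) :=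
          Finset.sum_le_sum fun i _ => (hF1 (u i)).2
      _ = (n : ℝ) * (Real.sqrt b / 2) := by
          rw [Finset.sum_const, Finset.card_univ, Fintype.card_fin, nsmul_eq_mul]
  have hnpos : (0:ℝ) < n := by exact_mod_cast hn
  -- δ ≥ 0
  have hδnn : 0 ≤ δ := by
    by_contra hneg
    push_neg at hneg
    have habs : |δ| = -δ := abs_of_neg hneg
    have hle : ∀ i, g (u i) - g (v i) ≤ C * δ := by
      intro i
      have := (abs_le.mp (key i)).2
      rw [habs] at this
      linarith
    have hsum2 : ∑ i, (g (u i) - g (v i)) ≤ (n : ℝ) * (C * δ) := by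
      calc ∑ i, (g (u i) - g (v i)) ≤ ∑ _i : Fin n, (C * δ) :=
            Finset.sum_le_sum fun i _ => hle i
        _ = (n : ℝ) * (C * δ) := by
            rw [Finset.sum_const, Finset.card_univ, Fintype.card_fin, nsmul_eq_mul]
    nlinarith [mul_pos hnpos hC]
  have habsδ : |δ| = δ := abs_of_nonneg hδnn
  have hti : ∀ i, C * δ ≤ g (u i) - g (v i) ∧ g (u i) - g (v i) ≤ δ := by
    intro i
    have h := abs_le.mp (key i)
    rw [habsδ] at h
    exact ⟨by linarith [h.1], by linarith [h.2]⟩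
  -- δ ≤ √b / (2C)
  have hδle : C * δ ≤ Real.sqrt b / 2 := by
    have hsum3 : (n : ℝ) * (C * δ) ≤ ∑ i, (g (u i) - g (v i)) := by
      calc (n : ℝ) * (C * δ) = ∑ _i : Fin n, (C * δ) := by
            rw [Finset.sum_const, Finset.card_univ, Fintype.card_fin, nsmul_eq_mul]
        _ ≤ ∑ i, (g (u i) - g (v i)) := Finset.sum_le_sum fun i _ => (hti i).1
    nlinarith
  -- per-component bound
  have hcomp : ∀ i, (w i - wstar i) ^ 2 ≤ b / 4 + b / (4 * C ^ 2) := by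
    intro i
    have hwdiff : w i - wstar i
        = (g (u i) - g (v i)) - (g (u i) - max (u i) 0) := by
      rw [hgu i, hgv i]; ring
    rw [hwdiff]
    exact sq_bound b C _ _ δ (Real.sqrt b) hC hsqb hsqbnn (hF1 (u i)).1 (hF1 (u i)).2
      (le_trans (by positivity) (hti i).1) (hti i).2 hδle
  have hsumfinal : ∑ i, (w i - wstar i) ^ 2 ≤ (n : ℝ) * (b / 4 + b / (4 * C ^ 2)) := by
    calc ∑ i, (w i - wstar i) ^ 2 ≤ ∑ _i : Fin n, (b / 4 + b / (4 * C ^ 2)) :=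
          Finset.sum_le_sum fun i _ => hcomp i
      _ = (n : ℝ) * (b / 4 + b / (4 * C ^ 2)) := by
          rw [Finset.sum_const, Finset.card_univ, Fintype.card_fin, nsmul_eq_mul]
  have hRHS : Real.sqrt ((n : ℝ) * (b / 4 + b / (4 * C ^ 2)))
      = Real.sqrt n * Real.sqrt b / 2 * Real.sqrt (1 + 1 / C ^ 2) := by
    have h1 : Real.sqrt n ^ 2 = (n : ℝ) := Real.sq_sqrt (by positivity)
    have h2 : Real.sqrt (1 + 1 / C ^ 2) ^ 2 = 1 + 1 / C ^ 2 := Real.sq_sqrt (by positivity)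
    have heq : (n : ℝ) * (b / 4 + b / (4 * C ^ 2))
        = (Real.sqrt n * Real.sqrt b / 2 * Real.sqrt (1 + 1 / C ^ 2)) ^ 2 := by
      have hexp : (Real.sqrt n * Real.sqrt b / 2 * Real.sqrt (1 + 1 / C ^ 2)) ^ 2
          = Real.sqrt n ^ 2 * Real.sqrt b ^ 2 / 4 * Real.sqrt (1 + 1 / C ^ 2) ^ 2 := by
        ring
      rw [hexp, h1, h2, hsqb]
      field_simp
    rw [heq, Real.sqrt_sq (by positivity)]
  calc Real.sqrt (∑ i, (w i - wstar i) ^ 2)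
      ≤ Real.sqrt ((n : ℝ) * (b / 4 + b / (4 * C ^ 2))) := Real.sqrt_le_sqrt hsumfinal
    _ = _ := hRHS
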